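/- Let G be a graph in which every vertex has a neighbor selected by a function f: V → V with f(v) adjacent to v, and suppose there is a word ω of length t in which every length-2 factor appears at most once, and a labeling π of vertices by letters of ω such that: for every vertex v either v is within distance 1 of a set S, or π(f(v))π(v) is a factor of ω at a unique position ℓ(v), and π(f(v))π(v)π(w) is a factor of ω for every neighbor w of v with appropriate phase. Then every vertex v with π(f(v))π(v) = ω_ℓ ω_{ℓ+1} satisfies d(v, S) ≤ ℓ + 1; in particular S is a dominating set at distance t. -/
import Mathlib


/-- Soundness of the de Bruijn-word certification scheme for domination at distance `t`.

Let `G` be a graph in which every vertex `v` has a selected neighbor `f v`.  Let `ω` be a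
word of length `t` (with letters `ω 1, …, ω t` in an alphabet `A`) in which every
length-2 factor appears at most once, let `π` label the vertices by letters, let
`p : V → ZMod 3` be a phase, and let `S` be a set of vertices, such that for every
vertex `v`:
* either `v` is within distance 1 of `S`,
* or `π (f v) π v` is a factor of `ω` at some position `ℓ` (necessarily unique), and for
  every neighbor `w` of `v` with the appropriate phase (`p w = p v + 1`), the word
  `π (f v) (π v) (π w)` is a factor of `ω` (at the same position),

and the phase decreases along `f` away from `S`.  Then every vertex `v` with
`π (f v) π v = ω_ℓ ω_{ℓ+1}` is at distance at most `ℓ + 1` from `S`; in particular `S`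
is a dominating set at distance `t`. -/
theorem stmt_19 {V : Type} (G : SimpleGraph V) (S : Set V) (f : V → V)
    (A : Type) (t : ℕ) (ht : 1 ≤ t) (ω : ℕ → A) (π : V → A) (p : V → ZMod 3)
    (hf : ∀ v, G.Adj v (f v))
    (huniq : ∀ ℓ m, 1 ≤ ℓ → ℓ + 1 ≤ t → 1 ≤ m → m + 1 ≤ t →
      ω ℓ = ω m → ω (ℓ + 1) = ω (m + 1) → ℓ = m)
    (hphase : ∀ v, ¬(∃ s ∈ S, v = s ∨ G.Adj v s) → p (f v) = p v - 1)
    (hlocal : ∀ v, (∃ s ∈ S, v = s ∨ G.Adj v s) ∨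
      (∃ ℓ, 1 ≤ ℓ ∧ ℓ + 1 ≤ t ∧ ω ℓ = π (f v) ∧ ω (ℓ + 1) = π v ∧
        ∀ w, G.Adj v w → p w = p v + 1 → ℓ + 2 ≤ t ∧ ω (ℓ + 2) = π w)) :
    (∀ v ℓ, 1 ≤ ℓ → ℓ + 1 ≤ t → ω ℓ = π (f v) → ω (ℓ + 1) = π v →
      ∃ s ∈ S, ∃ q : G.Walk v s, q.length ≤ ℓ + 1) ∧
    (∀ v, ∃ s ∈ S, ∃ q : G.Walk v s, q.length ≤ t) := by
  have key : ∀ ℓ, ∀ v, 1 ≤ ℓ → ℓ + 1 ≤ t → ω ℓ = π (f v) → ω (ℓ + 1) = π v →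
      ∃ s ∈ S, ∃ q : G.Walk v s, q.length ≤ ℓ + 1 := by
    intro ℓ
    induction ℓ using Nat.strong_induction_on with
    | _ ℓ ih =>
      intro v hℓ1 hℓt hωℓ hωℓ1
      by_cases hnear : ∃ s ∈ S, v = s ∨ G.Adj v s
      · obtain ⟨s, hs, h⟩ := hnear
        rcases h with rfl | hadj
        · exact ⟨v, hs, SimpleGraph.Walk.nil, by simp⟩
        · exact ⟨s, hs, SimpleGraph.Walk.cons hadj SimpleGraph.Walk.nil, by
            simp only [SimpleGraph.Walk.length_cons, SimpleGraph.Walk.length_nil]; omega⟩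
      · have hpv := hphase v hnear
        rcases hlocal (f v) with hnearu | ⟨m, hm1, hmt, hωm, hωm1, hw⟩
        · obtain ⟨s, hs, h⟩ := hnearu
          rcases h with heq | hadj
          · subst heq
            exact ⟨f v, hs, SimpleGraph.Walk.cons (hf v) SimpleGraph.Walk.nil, by
              simp only [SimpleGraph.Walk.length_cons, SimpleGraph.Walk.length_nil]; omega⟩
          · exact ⟨s, hs, SimpleGraph.Walk.cons (hf v)
              (SimpleGraph.Walk.cons hadj SimpleGraph.Walk.nil), by
              simp only [SimpleGraph.Walk.length_cons, SimpleGraph.Walk.length_nil]; omega⟩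
        · have hadjuv : G.Adj (f v) v := (hf v).symm
          have hpveq : p v = p (f v) + 1 := by rw [hpv]; ring
          obtain ⟨hm2t, hωm2⟩ := hw v hadjuv hpveq
          have heq : m + 1 = ℓ := by
            apply huniq (m + 1) ℓ (by omega) (by omega) hℓ1 hℓt
            · rw [hωm1, hωℓ]
            · rw [hωm2, hωℓ1]
          obtain ⟨s, hs, q, hq⟩ := ih m (by omega) (f v) hm1 (by omega) hωm hωm1
          exact ⟨s, hs, SimpleGraph.Walk.cons (hf v) q, by
            simp only [SimpleGraph.Walk.length_cons]; omega⟩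
  refine ⟨fun v ℓ h1 h2 h3 h4 => key ℓ v h1 h2 h3 h4, fun v => ?_⟩
  rcases hlocal v with ⟨s, hs, h⟩ | ⟨ℓ, hℓ1, hℓt, hωℓ, hωℓ1, _⟩
  · rcases h with rfl | hadj
    · exact ⟨v, hs, SimpleGraph.Walk.nil, by simp⟩
    · exact ⟨s, hs, SimpleGraph.Walk.cons hadj SimpleGraph.Walk.nil, by
        simp only [SimpleGraph.Walk.length_cons, SimpleGraph.Walk.length_nil]; omega⟩
  · obtain ⟨s, hs, q, hq⟩ := key ℓ v hℓ1 hℓt hωℓ hωℓ1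
    exact ⟨s, hs, q, by omega⟩
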